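/- Let M ∈ ℝ^{n×n} satisfy ρ(M) < 1, let S ∈ ℝ^{n×n} be symmetric, and let N ∈ ℝ^{n×q} be arbitrary. Define P = Σ_{k=0}^∞ (Mᵀ)^k S M^k (the series converges since ρ(M) < 1) and Y = (I_n − M)⁻¹. Then tr(Nᵀ P N) + 2·tr(Nᵀ P M Y N) = tr(Nᵀ Yᵀ S Y N). -/

import Mathlib

noncomputable section

open Matrix

/-- Spectral radius of a real square matrix: supremum of the moduli of its complex eigenvalues. -/
def specRad {n : ℕ} (M : Matrix (Fin n) (Fin n) ℝ) : ℝ :=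
  sSup ((fun μ : ℂ => ‖μ‖) '' spectrum ℂ (M.map (algebraMap ℝ ℂ)))

section analytic
open scoped ENNReal NNReal
attribute [local instance] Matrix.linftyOpNormedRing Matrix.linftyOpNormedAlgebra

lemma specRad_entry_bound {n : ℕ} (M : Matrix (Fin n) (Fin n) ℝ) (hM : specRad M < 1) :
    ∃ g : ℕ → ℝ, (∀ k, 0 ≤ g k) ∧ Summable (fun k => g k * g k) ∧
      ∀ (k : ℕ) (i j : Fin n), |(M ^ k) i j| ≤ g k := by
  set A := M.map (algebraMap ℝ ℂ) with hA
  haveI : CompleteSpace (Matrix (Fin n) (Fin n) ℂ) := FiniteDimensional.complete ℂ _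
  have hbdd : BddAbove ((fun μ : ℂ => ‖μ‖) '' spectrum ℂ A) :=
    ((Matrix.finite_spectrum A).image _).bddAbove
  have hsp : spectralRadius ℂ A < 1 := by
    rw [spectralRadius]
    refine lt_of_le_of_lt (iSup₂_le fun μ hμ => ?_) (ENNReal.ofReal_lt_one.mpr hM)
    have h1 : ‖μ‖ ≤ specRad M := le_csSup hbdd ⟨μ, hμ, rfl⟩
    rw [← ENNReal.ofReal_coe_nnreal, coe_nnnorm]
    exact ENNReal.ofReal_le_ofReal h1
  obtain ⟨r, hr1, hr2⟩ := ENNReal.lt_iff_exists_nnreal_btwn.mp hsp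
  have hrlt : (r : ℝ) < 1 := by exact_mod_cast ENNReal.coe_lt_one_iff.mp hr2
  have hG := spectrum.pow_nnnorm_pow_one_div_tendsto_nhds_spectralRadius A
  have hev : ∀ᶠ (k : ℕ) in Filter.atTop, (‖A ^ k‖₊ : ℝ≥0∞) ^ (1/(k:ℝ)) < (r : ℝ≥0∞) :=
    hG.eventually_lt_const hr1
  have hev2 : ∀ᶠ k in Filter.atTop, ‖A ^ k‖ ≤ (r : ℝ) ^ k := by
    filter_upwards [hev, Filter.eventually_ge_atTop 1] with k hk hk1
    have hk0 : ((k : ℕ) : ℝ) ≠ 0 := by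
      have : 0 < k := hk1
      positivity
    have h2 : (‖A ^ k‖₊ : ℝ≥0∞) ≤ (r : ℝ≥0∞) ^ (k : ℝ) := by
      calc (‖A ^ k‖₊ : ℝ≥0∞) = ((‖A ^ k‖₊ : ℝ≥0∞) ^ (1/(k:ℝ))) ^ (k : ℝ) := by
            rw [← ENNReal.rpow_mul, one_div, inv_mul_cancel₀ hk0, ENNReal.rpow_one]
        _ ≤ (r : ℝ≥0∞) ^ (k : ℝ) := ENNReal.rpow_le_rpow hk.le (Nat.cast_nonneg k)
    rw [ENNReal.rpow_natCast, ← ENNReal.coe_pow, ENNReal.coe_le_coe] at h2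
    calc ‖A ^ k‖ = ((‖A ^ k‖₊ : ℝ≥0) : ℝ) := rfl
      _ ≤ ((r ^ k : ℝ≥0) : ℝ) := by exact_mod_cast h2
      _ = (r : ℝ) ^ k := by push_cast; ring
  refine ⟨fun k => ‖A ^ k‖, fun k => norm_nonneg _, ?_, ?_⟩
  · refine Summable.of_norm_bounded_eventually_nat (g := fun k => ((r : ℝ) * r) ^ k) ?_ ?_
    · exact summable_geometric_of_lt_one (by positivity) (by nlinarith [r.coe_nonneg])
    · filter_upwards [hev2] with k hk
      rw [Real.norm_eq_abs, abs_of_nonneg (by positivity), mul_pow]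
      exact mul_le_mul hk hk (norm_nonneg _) (by positivity)
  · intro k i j
    have hmap : A ^ k = (M ^ k).map (algebraMap ℝ ℂ) := by
      rw [hA, ← RingHom.mapMatrix_apply, ← map_pow, RingHom.mapMatrix_apply]
    have hentry : |(M ^ k) i j| = ‖(A ^ k) i j‖ := by
      rw [hmap, Matrix.map_apply]
      simp [Complex.norm_real]
    rw [hentry]
    -- entry ≤ linfty op norm
    have : ‖(A ^ k) i j‖₊ ≤ ‖A ^ k‖₊ := by
      rw [Matrix.linfty_opNNNorm_def]
      calc ‖(A ^ k) i j‖₊ ≤ ∑ j', ‖(A ^ k) i j'‖₊ :=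
            Finset.single_le_sum (f := fun j' => ‖(A ^ k) i j'‖₊) (fun _ _ => zero_le) (Finset.mem_univ j)
        _ ≤ _ := Finset.le_sup (f := fun i => ∑ j', ‖(A ^ k) i j'‖₊) (Finset.mem_univ i)
    exact_mod_cast this

end analytic

lemma isUnit_one_sub_of_specRad {n : ℕ} (M : Matrix (Fin n) (Fin n) ℝ) (hM : specRad M < 1) :
    IsUnit (1 - M).det := by
  by_contra h
  have hdet : (1 - M).det = 0 := by
    simpa [isUnit_iff_ne_zero] using h
  have h1 : (1 : ℂ) ∈ spectrum ℂ (M.map (algebraMap ℝ ℂ)) := by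
    rw [spectrum.mem_iff]
    intro hu
    rw [Matrix.isUnit_iff_isUnit_det] at hu
    have heq : (algebraMap ℂ (Matrix (Fin n) (Fin n) ℂ)) 1 - M.map (algebraMap ℝ ℂ)
        = (1 - M).map (algebraMap ℝ ℂ) := by
      simp [Matrix.map_sub]
    rw [heq, ← RingHom.mapMatrix_apply, ← RingHom.map_det, hdet, map_zero] at hu
    exact (isUnit_iff_ne_zero.mp hu) rfl
  have hbdd : BddAbove ((fun μ : ℂ => ‖μ‖) '' spectrum ℂ (M.map (algebraMap ℝ ℂ))) :=
    ((Matrix.finite_spectrum _).image _).bddAbove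
  have h2 : (1 : ℝ) ≤ specRad M := by
    have h3 : ‖(1 : ℂ)‖ ≤ specRad M := le_csSup hbdd ⟨(1 : ℂ), h1, rfl⟩
    simpa using h3
  linarith

/-- Let `ρ(M) < 1`, `S` symmetric, `P = Σ_k (Mᵀ)^k S M^k`, `Y = (I − M)⁻¹`.
Then `tr(NᵀPN) + 2 tr(NᵀPMYN) = tr(NᵀYᵀSYN)`. -/
theorem stmt7 (n q : ℕ) (M S : Matrix (Fin n) (Fin n) ℝ) (N : Matrix (Fin n) (Fin q) ℝ)
    (hM : specRad M < 1) (hS : Sᵀ = S)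
    (P : Matrix (Fin n) (Fin n) ℝ) (hP : P = ∑' k : ℕ, (Mᵀ) ^ k * S * M ^ k)
    (Y : Matrix (Fin n) (Fin n) ℝ) (hY : Y = (1 - M)⁻¹) :
    (Nᵀ * P * N).trace + 2 * (Nᵀ * P * M * Y * N).trace = (Nᵀ * Yᵀ * S * Y * N).trace := by
  obtain ⟨g, hg0, hgsum, hgb⟩ := specRad_entry_bound M hM
  set f : ℕ → Matrix (Fin n) (Fin n) ℝ := fun k => (Mᵀ) ^ k * S * M ^ k with hf
  set C : ℝ := ∑ b, ∑ a, |S a b| with hC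
  have hfk : ∀ (k : ℕ) (i j : Fin n), |f k i j| ≤ C * (g k * g k) := by
    intro k i j
    have hrw : f k i j = ∑ b, ∑ a, (M ^ k) a i * S a b * (M ^ k) b j := by
      simp only [hf, ← Matrix.transpose_pow, Matrix.mul_apply, Matrix.transpose_apply,
        Finset.sum_mul]
    rw [hrw]
    calc |∑ b, ∑ a, (M ^ k) a i * S a b * (M ^ k) b j|
        ≤ ∑ b, |∑ a, (M ^ k) a i * S a b * (M ^ k) b j| := Finset.abs_sum_le_sum_abs _ _
      _ ≤ ∑ b, ∑ a, |(M ^ k) a i * S a b * (M ^ k) b j| :=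
          Finset.sum_le_sum fun b _ => Finset.abs_sum_le_sum_abs _ _
      _ ≤ ∑ b, ∑ a, |S a b| * (g k * g k) := by
          refine Finset.sum_le_sum fun b _ => Finset.sum_le_sum fun a _ => ?_
          rw [abs_mul, abs_mul]
          have h1 := hgb k a i
          have h2 := hgb k b j
          have h3 := abs_nonneg ((M ^ k) a i)
          have h4 := abs_nonneg ((M ^ k) b j)
          have h5 := abs_nonneg (S a b)
          have h6 := hg0 k
          calc |(M ^ k) a i| * |S a b| * |(M ^ k) b j| ≤ g k * |S a b| * g k :=
                mul_le_mul (mul_le_mul_of_nonneg_right h1 h5) h2 h4 (by positivity)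
            _ = |S a b| * (g k * g k) := by ring
      _ = C * (g k * g k) := by rw [hC, Finset.sum_mul]; simp [Finset.sum_mul]
  have hsum : Summable f := by
    refine Pi.summable.mpr ?_
    intro i
    rw [Pi.summable]
    intro j
    have hC0 : 0 ≤ C := Finset.sum_nonneg fun _ _ => Finset.sum_nonneg fun _ _ => abs_nonneg _
    refine Summable.of_norm_bounded (g := fun k => C * (g k * g k)) (hgsum.mul_left C) ?_
    intro k
    simpa [Real.norm_eq_abs] using hfk k i j
  have hhas : HasSum f P := hP ▸ hsum.hasSum
  -- Lyapunov equation
  have hshift : ∀ k, Mᵀ * f k * M = f (k + 1) := by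
    intro k
    simp only [hf]
    rw [pow_succ M, pow_succ' Mᵀ]
    noncomm_ring
  have hmulsum : HasSum (fun k => f (k + 1)) (Mᵀ * P * M) := by
    have cont : Continuous fun X : Matrix (Fin n) (Fin n) ℝ => Mᵀ * X * M :=
      (continuous_const.matrix_mul continuous_id).matrix_mul continuous_const
    let φ : Matrix (Fin n) (Fin n) ℝ →+ Matrix (Fin n) (Fin n) ℝ :=
      AddMonoidHom.mk' (fun X => Mᵀ * X * M) (by intro a b; noncomm_ring)
    have h : HasSum (fun k => Mᵀ * f k * M) (Mᵀ * P * M) := hhas.map φ (by exact cont)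
    simpa only [hshift] using h
  have hf0 : f 0 = S := by simp [hf]
  have hlyap : S + Mᵀ * P * M = P := by
    have h1 : P = f 0 + ∑' k, f (k + 1) := by
      rw [hP]; exact Summable.tsum_eq_zero_add hsum
    rw [hf0, hmulsum.tsum_eq] at h1
    exact h1.symm
  -- P symmetric
  have hPsym : Pᵀ = P := by
    rw [hP, Matrix.transpose_tsum]
    refine tsum_congr fun k => ?_
    simp [Matrix.transpose_mul, Matrix.transpose_pow, hS, mul_assoc]
  -- Y inverse facts
  have hdet := isUnit_one_sub_of_specRad M hM
  have hY1 : (1 - M) * Y = 1 := by rw [hY]; exact Matrix.mul_nonsing_inv _ hdet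
  have eq1 : M * Y = Y - 1 := by
    have : Y - M * Y = 1 := by
      have := hY1
      rwa [Matrix.sub_mul, Matrix.one_mul] at this
    linear_combination (norm := noncomm_ring) -this
  have eq2 : Yᵀ * Mᵀ = Yᵀ - 1 := by
    have := congrArg Matrix.transpose eq1
    simpa [Matrix.transpose_mul, Matrix.transpose_sub] using this
  -- key matrix identity
  have hSeq : S = P - Mᵀ * P * M := eq_sub_of_add_eq hlyap
  have key : P + P * M * Y + Yᵀ * Mᵀ * P = Yᵀ * S * Y := by
    have k1 : Yᵀ * S * Y = Yᵀ * P * Y - Yᵀ * Mᵀ * P * (M * Y) := by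
      rw [hSeq]; noncomm_ring
    rw [k1, show P * M * Y = P * (M * Y) from by noncomm_ring, eq1, eq2]
    noncomm_ring
  -- trace juggling
  have htr : (Nᵀ * P * M * Y * N).trace = (Nᵀ * (Yᵀ * Mᵀ * P) * N).trace := by
    have : (Nᵀ * (Yᵀ * Mᵀ * P) * N) = (Nᵀ * P * M * Y * N)ᵀ := by
      simp [Matrix.transpose_mul, hPsym, Matrix.mul_assoc]
    rw [this, Matrix.trace_transpose]
  have expand : Nᵀ * (P + P * M * Y + Yᵀ * Mᵀ * P) * N
      = Nᵀ * P * N + Nᵀ * (P * M * Y) * N + Nᵀ * (Yᵀ * Mᵀ * P) * N := by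
    simp only [Matrix.mul_add, Matrix.add_mul]
  calc (Nᵀ * P * N).trace + 2 * (Nᵀ * P * M * Y * N).trace
      = (Nᵀ * P * N).trace + (Nᵀ * (P * M * Y) * N).trace + (Nᵀ * (Yᵀ * Mᵀ * P) * N).trace := by
        rw [← htr]; rw [show Nᵀ * (P * M * Y) * N = Nᵀ * P * M * Y * N from by simp only [Matrix.mul_assoc]]
        ring
    _ = (Nᵀ * (P + P * M * Y + Yᵀ * Mᵀ * P) * N).trace := by
        rw [expand, Matrix.trace_add, Matrix.trace_add]
    _ = (Nᵀ * Yᵀ * S * Y * N).trace := by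
        rw [key, show Nᵀ * (Yᵀ * S * Y) * N = Nᵀ * Yᵀ * S * Y * N from by simp only [Matrix.mul_assoc]]
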